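/- Let t and β be positive real numbers with t < 1, and define h : [0,∞) → [0,∞) by h(x) = max(x − β·x^t, 0). Let M ≥ 1 be an integer and let n = n_0, n_1, …, n_M be non-negative real numbers such that n_i ≥ 1 for every 0 ≤ i ≤ M−1, n_M < 1, and n_{i+1} ≤ h(n_i) for every 0 ≤ i ≤ M−1. Then M ≤ n^{1−t}/(β(1−t)) + 1. -/

import Mathlib

/-- One-step decrease of `x ^ (1 - t)` along the iteration. -/
lemma rpow_step_decrease (t β x y : ℝ) (ht0 : 0 < t) (ht1 : t < 1) (hβ : 0 < β)
    (hx : 1 ≤ x) (hy : 0 ≤ y) (hxy : y ≤ x - β * x ^ t) :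
    β * (1 - t) ≤ x ^ (1 - t) - y ^ (1 - t) := by
  have hx0 : (0:ℝ) < x := lt_of_lt_of_le one_pos hx
  set p : ℝ := 1 - t with hp
  have hp0 : 0 < p := by simp [hp]; linarith
  have hs : -1 ≤ y / x - 1 := by
    have : 0 ≤ y / x := div_nonneg hy hx0.le
    linarith
  have hber := rpow_one_add_le_one_add_mul_self hs hp0.le (by simp [hp]; linarith)
  rw [add_sub_cancel] at hber
  have hdiv : (y / x) ^ p = y ^ p / x ^ p := Real.div_rpow hy hx0.le p
  rw [hdiv] at hber
  have hxp : 0 < x ^ p := Real.rpow_pos_of_pos hx0 p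
  have h1 : y ^ p ≤ x ^ p * (1 + p * (y / x - 1)) := by
    rw [div_le_iff₀ hxp] at hber; linarith [hber]
  have h2 : x ^ p * (1 + p * (y / x - 1)) = x ^ p - p * x ^ (p - 1) * (x - y) := by
    have hxp1 : x ^ (p - 1) = x ^ p / x := by
      rw [Real.rpow_sub hx0, Real.rpow_one]
    rw [hxp1]; field_simp
    ring
  rw [h2] at h1
  have hxy' : β * x ^ t ≤ x - y := by linarith
  have h3 : p * x ^ (p - 1) * (β * x ^ t) ≤ p * x ^ (p - 1) * (x - y) := by
    apply mul_le_mul_of_nonneg_left hxy'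
    positivity
  have h4 : p * x ^ (p - 1) * (β * x ^ t) = β * p := by
    have : x ^ (p - 1) * x ^ t = 1 := by
      rw [← Real.rpow_add hx0]
      have hpt : p - 1 + t = 0 := by simp [hp]
      rw [hpt, Real.rpow_zero]
    calc p * x ^ (p - 1) * (β * x ^ t) = β * p * (x ^ (p - 1) * x ^ t) := by ring
      _ = β * p := by rw [this]; ring
  nlinarith [h1, h3, h4]

/-- Iteration lemma for sequences dominated by `x ↦ max (x - β * x ^ t) 0`. -/
theorem iteration_sequence_length_bound
    (t β : ℝ) (ht0 : 0 < t) (ht1 : t < 1) (hβ : 0 < β)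
    (M : ℕ) (hM : 1 ≤ M) (a : ℕ → ℝ)
    (hnonneg : ∀ i ≤ M, 0 ≤ a i)
    (hone : ∀ i < M, 1 ≤ a i)
    (hlast : a M < 1)
    (hstep : ∀ i < M, a (i + 1) ≤ max (a i - β * a i ^ t) 0) :
    (M : ℝ) ≤ a 0 ^ (1 - t) / (β * (1 - t)) + 1 := by
  -- key: for i with i+1 < M, a i ^ (1-t) - a (i+1) ^ (1-t) ≥ β(1-t)
  have key : ∀ i, i + 1 < M → β * (1 - t) ≤ a i ^ (1 - t) - a (i + 1) ^ (1 - t) := by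
    intro i hi
    have hai : 1 ≤ a i := hone i (by omega)
    have hai1 : 1 ≤ a (i + 1) := hone (i + 1) hi
    have hst := hstep i (by omega)
    have hmax : max (a i - β * a i ^ t) 0 = a i - β * a i ^ t := by
      rcases max_cases (a i - β * a i ^ t) 0 with ⟨h, _⟩ | ⟨h, _⟩
      · exact h
      · rw [h] at hst; linarith
    rw [hmax] at hst
    exact rpow_step_decrease t β (a i) (a (i+1)) ht0 ht1 hβ hai (by linarith) hst
  -- telescoping
  have tele : ∀ k, k < M → (k : ℝ) * (β * (1 - t)) ≤ a 0 ^ (1 - t) - a k ^ (1 - t) := by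
    intro k
    induction k with
    | zero => intro _; simp
    | succ n ih =>
      intro hk
      have h1 := ih (by omega)
      have h2 := key n hk
      push_cast
      linarith
  have hfin := tele (M - 1) (by omega)
  have hM1 : ((M - 1 : ℕ) : ℝ) = (M : ℝ) - 1 := by
    have : (1:ℕ) ≤ M := hM
    push_cast [Nat.cast_sub this]
    ring
  rw [hM1] at hfin
  have hlastp : 0 ≤ a (M - 1) ^ (1 - t) :=
    Real.rpow_nonneg (hnonneg (M-1) (by omega)) _
  have hβt : 0 < β * (1 - t) := by
    apply mul_pos hβ; linarith
  have h5 : (M:ℝ) - 1 ≤ a 0 ^ (1 - t) / (β * (1 - t)) := by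
    rw [le_div_iff₀ hβt]; nlinarith
  linarith
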